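/- If f : ℝⁿ → ℝ is differentiable with L-Lipschitz continuous gradient, then for all points z1, z2, z3 in ℝⁿ, f(z2) ≤ f(z1) + ⟨z2 - z1, ∇f(z3)⟩ + (L/2)‖z2 - z3‖². -/

import Mathlib

open RealInnerProductSpace

section aux

variable {n : ℕ}

local notation "E" => EuclideanSpace ℝ (Fin n)

lemma line_hasDerivAt (f : E → ℝ) (hdiff : Differentiable ℝ f) (x v : E) (t : ℝ) :
    HasDerivAt (fun s : ℝ => f (x + s • v)) ⟪gradient f (x + t • v), v⟫ t := by
  have hc : HasDerivAt (fun s : ℝ => x + s • v) v t := by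
    simpa using ((hasDerivAt_id t).smul_const v).const_add x
  have hf : HasFDerivAt f (InnerProductSpace.toDual ℝ _ (gradient f (x + t • v))) (x + t • v) :=
    (hdiff _).hasGradientAt
  have h := hf.comp_hasDerivAt t hc
  rw [InnerProductSpace.toDual_apply_apply] at h
  exact h

lemma grad_ineq (f : E → ℝ) (hconv : ConvexOn ℝ Set.univ f)
    (hdiff : Differentiable ℝ f) (x y : E) :
    f x + ⟪gradient f x, y - x⟫ ≤ f y := by
  set g : ℝ → ℝ := fun s => f (x + s • (y - x)) with hg
  have hder : HasDerivAt g ⟪gradient f x, y - x⟫ 0 := by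
    simpa using line_hasDerivAt f hdiff x (y - x) 0
  have hslope : ∀ t : ℝ, t ∈ Set.Ioc (0:ℝ) 1 → slope g 0 t ≤ f y - f x := by
    intro t ht
    have hconv' := hconv.2 (Set.mem_univ x) (Set.mem_univ y)
      (show (0:ℝ) ≤ 1 - t by linarith [ht.2]) (le_of_lt ht.1)
      (show (1 - t) + t = 1 by ring)
    have hxt : (1 - t) • x + t • y = x + t • (y - x) := by
      simp [smul_sub, sub_smul]; abel
    rw [hxt] at hconv'
    have hgt : g t ≤ (1 - t) * f x + t * f y := by simpa [hg] using hconv'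
    have hg0 : g 0 = f x := by simp [hg]
    rw [slope_def_field, sub_zero, div_le_iff₀ ht.1]
    nlinarith [ht.1]
  have htend : Filter.Tendsto (slope g 0) (nhdsWithin 0 (Set.Ioi (0:ℝ)))
      (nhds ⟪gradient f x, y - x⟫) :=
    (hasDerivAt_iff_tendsto_slope.mp hder).mono_left
      (nhdsWithin_mono _ (fun a ha => by simpa using ne_of_gt ha))
  have hle : ⟪gradient f x, y - x⟫ ≤ f y - f x := by
    refine le_of_tendsto htend ?_
    filter_upwards [Ioc_mem_nhdsGT_of_mem (Set.mem_Ico.mpr ⟨le_refl 0, one_pos⟩)] with t ht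
    exact hslope t ht
  linarith

lemma descent (f : E → ℝ) (L : ℝ) (hL : 0 ≤ L) (hdiff : Differentiable ℝ f)
    (hlip : ∀ x y, ‖gradient f x - gradient f y‖ ≤ L * ‖x - y‖) (x y : E) :
    f y ≤ f x + ⟪gradient f x, y - x⟫ + (L / 2) * ‖y - x‖ ^ 2 := by
  set v : E := y - x with hv
  set g : ℝ → ℝ := fun s => f (x + s • v) with hg
  set F : ℝ → ℝ := fun s => g s - g 0 - s * ⟪gradient f x, v⟫ with hF
  set B : ℝ → ℝ := fun s => L / 2 * ‖v‖ ^ 2 * s ^ 2 with hB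
  have hFd : ∀ t : ℝ, HasDerivAt F (⟪gradient f (x + t • v), v⟫ - ⟪gradient f x, v⟫) t := by
    intro t
    have := ((line_hasDerivAt f hdiff x v t).sub_const (g 0)).sub
      ((hasDerivAt_id t).mul_const ⟪gradient f x, v⟫)
    rw [one_mul] at this
    exact this
  have hBd : ∀ t : ℝ, HasDerivAt B (L * ‖v‖ ^ 2 * t) t := by
    intro t
    have := ((hasDerivAt_pow 2 t).const_mul (L / 2 * ‖v‖ ^ 2))
    exact this.congr_deriv (by simp; ring)
  have key : F 1 ≤ B 1 := by
    have := image_le_of_deriv_right_le_deriv_boundary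
      (f := F) (f' := fun t => ⟪gradient f (x + t • v), v⟫ - ⟪gradient f x, v⟫)
      (a := 0) (b := 1) (B := B) (B' := fun t => L * ‖v‖ ^ 2 * t)
      (fun t _ => (hFd t).continuousAt.continuousWithinAt)
      (fun t _ => (hFd t).hasDerivWithinAt)
      (by simp [hF, hB])
      (fun t _ => (hBd t).continuousAt.continuousWithinAt)
      (fun t _ => (hBd t).hasDerivWithinAt)
      ?_ (Set.mem_Icc.mpr ⟨zero_le_one, le_refl 1⟩)
    · exact this
    · intro t ht
      have h1 : ⟪gradient f (x + t • v) - gradient f x, v⟫ ≤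
          ‖gradient f (x + t • v) - gradient f x‖ * ‖v‖ := real_inner_le_norm _ _
      have h2 : ‖gradient f (x + t • v) - gradient f x‖ ≤ L * ‖t • v‖ := by
        simpa using hlip (x + t • v) x
      have h3 : ‖t • v‖ = t * ‖v‖ := by
        rw [norm_smul, Real.norm_eq_abs, abs_of_nonneg ht.1]
      rw [inner_sub_left] at h1
      rw [h3] at h2
      have h4 : ‖gradient f (x + t • v) - gradient f x‖ * ‖v‖ ≤ L * (t * ‖v‖) * ‖v‖ :=
        mul_le_mul_of_nonneg_right h2 (norm_nonneg v)
      calc ⟪gradient f (x + t • v), v⟫ - ⟪gradient f x, v⟫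
          ≤ L * (t * ‖v‖) * ‖v‖ := le_trans h1 h4
        _ = L * ‖v‖ ^ 2 * t := by ring
  have hF1 : F 1 = f y - f x - ⟪gradient f x, v⟫ := by simp [hF, hg, hv]
  have hB1 : B 1 = L / 2 * ‖v‖ ^ 2 := by simp [hB]
  rw [hF1, hB1] at key
  linarith

end aux

theorem stmt0 {n : ℕ} (f : EuclideanSpace ℝ (Fin n) → ℝ) (L : ℝ) (hL : 0 ≤ L)
    (hconv : ConvexOn ℝ Set.univ f)
    (hdiff : Differentiable ℝ f)
    (hlip : ∀ x y, ‖gradient f x - gradient f y‖ ≤ L * ‖x - y‖) :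
    ∀ z1 z2 z3 : EuclideanSpace ℝ (Fin n),
      f z2 ≤ f z1 + ⟪z2 - z1, gradient f z3⟫ + (L / 2) * ‖z2 - z3‖ ^ 2 := by
  intro z1 z2 z3
  have h1 := descent f L hL hdiff hlip z3 z2
  have h2 := grad_ineq f hconv hdiff z3 z1
  have h3 : ⟪z2 - z1, gradient f z3⟫ =
      ⟪gradient f z3, z2 - z3⟫ - ⟪gradient f z3, z1 - z3⟫ := by
    rw [real_inner_comm, ← inner_sub_right]
    congr 1
    abel
  linarith
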